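/- Let η : ℝ^{n-1} → ℝ satisfy |η(x')| ≤ C|x'|^{-(n-1+ε)}, |Dη(x')| ≤ C|x'|^{-(n+ε)}, |D²η(x')| ≤ C|x'|^{-(n+1+ε)} for |x'| ≥ 1. Then the function h(ξ) := |ξ|² η(ξ/|ξ|²)² defined for 0 < |ξ| < 1 extends to a C² function on a neighborhood of ξ = 0 with h(0) = 0, Dh(0) = 0, D²h(0) = 0. -/

import Mathlib

open MeasureTheory Real Filter

noncomputable section

abbrev Euc (n : ℕ) := EuclideanSpace ℝ (Fin n)

def lapl {n : ℕ} (f : Euc n → ℝ) (x : Euc n) : ℝ :=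
  ∑ i, fderiv ℝ (fun y => fderiv ℝ f y (EuclideanSpace.single i 1)) x (EuclideanSpace.single i 1)

def diverg {n : ℕ} (A : Euc n → Euc n) (x : Euc n) : ℝ :=
  ∑ i, fderiv ℝ A x (EuclideanSpace.single i 1) i

def kelvinInv {n : ℕ} (x : Euc n) : Euc n := (‖x‖ ^ 2)⁻¹ • x

def lastIdx (n : ℕ) (hn : 0 < n) : Fin n := ⟨n - 1, Nat.sub_lt hn Nat.one_pos⟩

def eLast (n : ℕ) (hn : 0 < n) : Euc n := EuclideanSpace.single (lastIdx n hn) 1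

def horiz {n : ℕ} (x : Euc n) : Euc (n - 1) :=
  WithLp.toLp 2 fun (i : Fin (n - 1)) => x ⟨i.val, lt_of_lt_of_le i.isLt (Nat.sub_le n 1)⟩

def vert {n : ℕ} (hn : 0 < n) (x : Euc n) : ℝ := x (lastIdx n hn)

def mkPt {n : ℕ} (x' : Euc (n - 1)) (t : ℝ) : Euc n :=
  WithLp.toLp 2 fun (j : Fin n) => if h : (j : ℕ) < n - 1 then x' ⟨j, h⟩ else t

variable {m : ℕ} {F : Type*} [NormedAddCommGroup F] [NormedSpace ℝ F]

/-- scaling as a continuous linear equiv -/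
def scaleCLE (c : ℝ) (hc : c ≠ 0) : Euc m ≃L[ℝ] Euc m :=
  (LinearEquiv.smulOfNeZero ℝ (Euc m) c hc).toContinuousLinearEquiv

lemma scaleCLE_apply (c : ℝ) (hc : c ≠ 0) (x : Euc m) : scaleCLE c hc x = c • x := rfl

/-- Bound on iterated derivatives of a function homogeneous of (integer) degree `d`,
smooth away from the origin. -/
lemma homog_bound (f : Euc m → F) (d : ℤ)
    (hf : ContDiffOn ℝ 2 f {(0 : Euc m)}ᶜ)
    (hd : ∀ c : ℝ, 0 < c → ∀ x : Euc m, f (c • x) = (c ^ d) • f x) :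
    ∃ Q : ℝ, 0 ≤ Q ∧ ∀ i : ℕ, i ≤ 2 → ∀ x : Euc m, x ≠ 0 →
      ‖iteratedFDeriv ℝ i f x‖ ≤ Q * ‖x‖ ^ ((d : ℝ) - i) := by
  have hU : IsOpen ({(0 : Euc m)}ᶜ) := isOpen_compl_singleton
  have hUd : UniqueDiffOn ℝ ({(0 : Euc m)}ᶜ) := hU.uniqueDiffOn
  -- bound on the sphere
  have hQ : ∀ i : ℕ, i ≤ 2 → ∃ Q : ℝ, ∀ u ∈ Metric.sphere (0 : Euc m) 1,
      ‖iteratedFDerivWithin ℝ i f {(0 : Euc m)}ᶜ u‖ ≤ Q := by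
    intro i hi
    have hc : ContinuousOn (iteratedFDerivWithin ℝ i f {(0 : Euc m)}ᶜ)
        (Metric.sphere (0 : Euc m) 1) := by
      apply (hf.continuousOn_iteratedFDerivWithin (by exact_mod_cast hi) hUd).mono
      intro u hu
      simp only [Set.mem_compl_iff, Set.mem_singleton_iff]
      intro h0
      simp [h0] at hu
    obtain ⟨Q, hQ⟩ := (isCompact_sphere (0 : Euc m) 1).exists_bound_of_continuousOn hc
    exact ⟨Q, hQ⟩
  obtain ⟨Q0, hQ0⟩ := hQ 0 (by norm_num)
  obtain ⟨Q1, hQ1⟩ := hQ 1 (by norm_num)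
  obtain ⟨Q2, hQ2⟩ := hQ 2 (by norm_num)
  set Q : ℝ := max (max Q0 Q1) (max Q2 0) with hQdef
  refine ⟨Q, le_trans (le_max_right _ _) (le_max_right _ _), ?_⟩
  intro i hi x hx
  set r : ℝ := ‖x‖ with hr
  have hrpos : 0 < r := by simpa [hr] using norm_pos_iff.2 hx
  set u : Euc m := r⁻¹ • x with hu
  have hun : ‖u‖ = 1 := by
    rw [hu, norm_smul, norm_inv, Real.norm_eq_abs, abs_of_pos hrpos]
    field_simp
    exact hr.symm
  have hune : u ≠ 0 := by
    intro h; rw [h] at hun; simp at hun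
  have hxu : x = r • u := by
    rw [hu, smul_smul, mul_inv_cancel₀ hrpos.ne', one_smul]
  set e := scaleCLE (m := m) r hrpos.ne' with he
  have hpre : e ⁻¹' {(0 : Euc m)}ᶜ = {(0 : Euc m)}ᶜ := by
    ext y
    simp only [Set.mem_preimage, Set.mem_compl_iff, Set.mem_singleton_iff]
    rw [scaleCLE_apply]
    constructor
    · intro h h0; exact h (by rw [h0, smul_zero])
    · intro h h0; exact h ((smul_eq_zero.mp h0).resolve_left hrpos.ne')
  have hex : e u = x := by rw [scaleCLE_apply, ← hxu]
  have hmemU : e u ∈ (({(0 : Euc m)}ᶜ : Set (Euc m))) := by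
    simp only [Set.mem_compl_iff, Set.mem_singleton_iff, hex]
    exact hx
  -- key identity
  have key := ContinuousLinearEquiv.iteratedFDerivWithin_comp_right e f hUd hmemU i
  rw [hpre] at key
  have hcomp : f ∘ e = (r ^ d) • f := by
    funext y
    simp only [Function.comp_apply, Pi.smul_apply]
    rw [scaleCLE_apply]
    exact hd r hrpos y
  rw [hcomp] at key
  have hsmul : iteratedFDerivWithin ℝ i ((r ^ d) • f) {(0 : Euc m)}ᶜ u
      = (r ^ d) • iteratedFDerivWithin ℝ i f {(0 : Euc m)}ᶜ u :=
    iteratedFDerivWithin_const_smul_apply ((hf u (by simpa using hune)).of_le (by exact_mod_cast hi)) hUd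
      (by simpa using hune)
  rw [hsmul] at key
  rw [hex] at key
  -- compute the compContinuousLinearMap as a scalar multiple
  have hcm : (iteratedFDerivWithin ℝ i f {(0 : Euc m)}ᶜ x).compContinuousLinearMap
      (fun _ => (e : Euc m →L[ℝ] Euc m)) = (r ^ i) • iteratedFDerivWithin ℝ i f {(0 : Euc m)}ᶜ x := by
    ext v
    simp only [ContinuousMultilinearMap.compContinuousLinearMap_apply,
      ContinuousMultilinearMap.smul_apply]
    have : ∀ j : Fin i, (e : Euc m →L[ℝ] Euc m) (v j) = r • (v j) := fun j => rfl
    simp_rw [this]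
    rw [(iteratedFDerivWithin ℝ i f {(0 : Euc m)}ᶜ x).map_smul_univ (fun _ => r) v]
    simp [Finset.prod_const]
  rw [hcm] at key
  -- solve for the derivative at x
  have hri : (0:ℝ) < r ^ i := pow_pos hrpos i
  have hDx : iteratedFDerivWithin ℝ i f {(0 : Euc m)}ᶜ x
      = ((r ^ i)⁻¹ * r ^ d) • iteratedFDerivWithin ℝ i f {(0 : Euc m)}ᶜ u := by
    rw [mul_smul, key, smul_smul, inv_mul_cancel₀ hri.ne', one_smul]
  have hx' : x ∈ (({(0 : Euc m)}ᶜ : Set (Euc m))) := by simpa using hx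
  have hfull : iteratedFDerivWithin ℝ i f {(0 : Euc m)}ᶜ x = iteratedFDeriv ℝ i f x :=
    iteratedFDerivWithin_of_isOpen i hU hx'
  rw [← hfull, hDx, norm_smul, Real.norm_eq_abs]
  have hscal : |(r ^ i)⁻¹ * r ^ d| = r ^ ((d:ℝ) - i) := by
    rw [abs_of_pos (by positivity)]
    rw [Real.rpow_sub hrpos, Real.rpow_natCast, Real.rpow_intCast]
    ring
  rw [hscal]
  have hQu : ‖iteratedFDerivWithin ℝ i f {(0 : Euc m)}ᶜ u‖ ≤ Q := by
    have husph : u ∈ Metric.sphere (0 : Euc m) 1 := by simp [hun]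
    interval_cases i
    · exact le_trans (hQ0 u husph) (le_trans (le_max_left _ _) (le_max_left _ _))
    · exact le_trans (hQ1 u husph) (le_trans (le_max_right _ _) (le_max_left _ _))
    · exact le_trans (hQ2 u husph) (le_trans (le_max_left _ _) (le_max_right _ _))
  calc r ^ ((d:ℝ) - i) * ‖iteratedFDerivWithin ℝ i f {(0 : Euc m)}ᶜ u‖
      ≤ r ^ ((d:ℝ) - i) * Q := by
        apply mul_le_mul_of_nonneg_left hQu (le_of_lt (Real.rpow_pos_of_pos hrpos _))
    _ = Q * r ^ ((d:ℝ) - i) := by ring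

def kelvinInv' {n : ℕ} (x : Euc n) : Euc n := (‖x‖ ^ 2)⁻¹ • x

lemma kelvin_contDiffOn {m : ℕ} : ContDiffOn ℝ 2 (kelvinInv' (n := m)) {(0 : Euc m)}ᶜ := by
  apply ContDiffOn.fun_smul
  · apply ContDiffOn.inv ((contDiff_norm_sq (𝕜 := ℝ)).contDiffOn)
    intro x hx
    have : x ≠ 0 := by simpa using hx
    exact pow_ne_zero 2 (norm_ne_zero_iff.2 this)
  · exact contDiffOn_id

lemma kelvin_homog {m : ℕ} : ∀ c : ℝ, 0 < c → ∀ x : Euc m,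
    kelvinInv' (c • x) = (c ^ (-1 : ℤ)) • kelvinInv' x := by
  intro c hc x
  unfold kelvinInv'
  rw [norm_smul, Real.norm_eq_abs, abs_of_pos hc, zpow_neg_one, smul_smul, smul_smul]
  congr 1
  rw [mul_pow, mul_inv, mul_comm, ← mul_assoc]
  congr 1
  rw [pow_two, mul_inv, ← mul_assoc, mul_inv_cancel₀ hc.ne', one_mul]

lemma normsq_homog {m : ℕ} : ∀ c : ℝ, 0 < c → ∀ x : Euc m,
    (fun y : Euc m => ‖y‖ ^ 2) (c • x) = (c ^ (2 : ℤ)) • (fun y : Euc m => ‖y‖ ^ 2) x := by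
  intro c hc x
  simp only [norm_smul, Real.norm_eq_abs, abs_of_pos hc, smul_eq_mul, mul_pow]
  rw [show ((2:ℤ)) = ((2:ℕ) : ℤ) from rfl, zpow_natCast]

lemma main_bound {m : ℕ} (ε C' : ℝ) (hε : 0 < ε) (hC' : 0 ≤ C') (η : Euc m → ℝ)
    (hη : ContDiff ℝ 2 η)
    (hd : ∀ i : ℕ, i ≤ 2 → ∀ y : Euc m, 1 ≤ ‖y‖ →
      ‖iteratedFDeriv ℝ i η y‖ ≤ C' * ‖y‖ ^ (-((m : ℝ) + ε))) :
    ∃ M : ℝ, 0 ≤ M ∧ ∀ i : ℕ, i ≤ 2 → ∀ x : Euc m, x ≠ 0 → ‖x‖ < 1 →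
      ‖iteratedFDeriv ℝ i (fun ξ => ‖ξ‖ ^ 2 * (η (kelvinInv' ξ)) ^ 2) x‖ ≤
        M * ‖x‖ ^ (2 * (m : ℝ) + 2 + 2 * ε - 2 * i) := by
  have hU : IsOpen ({(0 : Euc m)}ᶜ) := isOpen_compl_singleton
  have hUd : UniqueDiffOn ℝ ({(0 : Euc m)}ᶜ) := hU.uniqueDiffOn
  obtain ⟨Qk, hQk0, hQk⟩ := homog_bound (kelvinInv' (n := m)) (-1) kelvin_contDiffOn kelvin_homog
  obtain ⟨Qq, hQq0, hQq⟩ := homog_bound (fun y : Euc m => ‖y‖ ^ 2) 2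
    ((contDiff_norm_sq (𝕜 := ℝ)).contDiffOn) normsq_homog
  set G : Euc m → ℝ := η ∘ kelvinInv' with hG
  have hGcd : ContDiffOn ℝ 2 G {(0 : Euc m)}ᶜ := hη.comp_contDiffOn kelvin_contDiffOn
  have hGGcd : ContDiffOn ℝ 2 (fun y => G y * G y) {(0 : Euc m)}ᶜ := hGcd.mul hGcd
  set B : ℝ := Qk + 1 with hB
  have hB1 : 1 ≤ B := by simp [hB]; linarith
  have hB0 : 0 < B := lt_of_lt_of_le one_pos hB1
  set K1 : ℝ := 2 * C' * B ^ 2 with hK1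
  have hK10 : 0 ≤ K1 := by positivity
  set K2 : ℝ := 4 * K1 ^ 2 with hK2
  have hK20 : 0 ≤ K2 := by positivity
  refine ⟨4 * Qq * K2, by positivity, ?_⟩
  intro i hi x hx hx1
  set r : ℝ := ‖x‖ with hr
  have hrpos : 0 < r := by simpa [hr] using norm_pos_iff.2 hx
  have hr1 : r ≤ 1 := le_of_lt hx1
  have hx' : x ∈ (({(0 : Euc m)}ᶜ : Set (Euc m))) := by simpa using hx
  -- the inverted point
  have hynorm : ‖kelvinInv' x‖ = r⁻¹ := by
    unfold kelvinInv'
    rw [norm_smul, norm_inv, norm_pow, norm_norm, ← hr]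
    rw [sq]
    field_simp
  have hy1 : 1 ≤ ‖kelvinInv' x‖ := by
    rw [hynorm]
    exact (one_le_inv₀ hrpos).mpr hr1
  -- Step A : uniform bounds on derivatives of η at the inverted point
  have hyb : ∀ j : ℕ, j ≤ 2 → ‖iteratedFDerivWithin ℝ j η Set.univ (kelvinInv' x)‖
      ≤ C' * r ^ ((m : ℝ) + ε) := by
    intro j hj
    rw [iteratedFDerivWithin_univ]
    refine le_trans (hd j hj _ hy1) ?_
    rw [hynorm, Real.inv_rpow hrpos.le, Real.rpow_neg hrpos.le, inv_inv]
  -- Step B : bounds on derivatives of the inversion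
  have hDk : ∀ j : ℕ, 1 ≤ j → j ≤ 2 →
      ‖iteratedFDerivWithin ℝ j (kelvinInv' (n := m)) {(0 : Euc m)}ᶜ x‖
        ≤ (B * r ^ (-(2:ℝ))) ^ j := by
    intro j h1 h2
    rw [iteratedFDerivWithin_of_isOpen j hU hx']
    refine le_trans (hQk j h2 x hx) ?_
    rw [mul_pow, ← Real.rpow_natCast (r ^ (-(2:ℝ))) j, ← Real.rpow_mul hrpos.le]
    have e1 : r ^ (((-1 : ℤ) : ℝ) - j) ≤ r ^ ((-(2:ℝ)) * j) := by
      apply Real.rpow_le_rpow_of_exponent_ge hrpos hr1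
      push_cast
      have : (1 : ℝ) ≤ j := by exact_mod_cast h1
      linarith
    have e2 : Qk ≤ B ^ j := le_trans (by simp [hB]) (le_self_pow₀ hB1 (by omega))
    exact mul_le_mul e2 e1 (Real.rpow_nonneg hrpos.le _) (by positivity)
  -- Step C : bounds on derivatives of G = η ∘ kelvinInv'
  have hGb : ∀ i' : ℕ, i' ≤ 2 → ‖iteratedFDerivWithin ℝ i' G {(0 : Euc m)}ᶜ x‖
      ≤ K1 * r ^ ((m : ℝ) + ε - 2 * i') := by
    intro i' hi'
    have comp := norm_iteratedFDerivWithin_comp_le (𝕜 := ℝ) (g := η) (f := kelvinInv')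
      (n := i') (s := {(0 : Euc m)}ᶜ) (t := Set.univ) (N := 2) hη.contDiffOn kelvin_contDiffOn
      (by exact_mod_cast hi') uniqueDiffOn_univ hUd (Set.mapsTo_univ _ _) hx'
      (fun j hj => hyb j (hj.trans hi')) (fun j h1 h2 => hDk j h1 (h2.trans hi'))
    refine le_trans comp ?_
    have hBpow : (B * r ^ (-(2:ℝ))) ^ i' = B ^ i' * r ^ ((-(2:ℝ)) * i') := by
      rw [mul_pow, ← Real.rpow_natCast (r ^ (-(2:ℝ))) i', ← Real.rpow_mul hrpos.le]
    rw [hBpow]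
    have hsplit : r ^ ((m : ℝ) + ε - 2 * i') = r ^ ((m : ℝ) + ε) * r ^ ((-(2:ℝ)) * i') := by
      rw [← Real.rpow_add hrpos]; ring_nf
    rw [hsplit]
    have hfacB : (i'.factorial : ℝ) * B ^ i' ≤ 2 * B ^ 2 := by
      have h1 : (i'.factorial : ℝ) ≤ 2 := by
        interval_cases i' <;> norm_num [Nat.factorial]
      have h2 : B ^ i' ≤ B ^ 2 := pow_le_pow_right₀ hB1 hi'
      have h3 : (0:ℝ) ≤ (i'.factorial : ℝ) := by positivity
      nlinarith [pow_pos hB0 i', pow_pos hB0 2]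
    have expand1 : (i'.factorial : ℝ) * (C' * r ^ ((m : ℝ) + ε)) * (B ^ i' * r ^ ((-(2:ℝ)) * i'))
        = ((i'.factorial : ℝ) * B ^ i') * (C' * (r ^ ((m : ℝ) + ε) * r ^ ((-(2:ℝ)) * i'))) := by
      ring
    have expand2 : K1 * (r ^ ((m : ℝ) + ε) * r ^ ((-(2:ℝ)) * i'))
        = (2 * B ^ 2) * (C' * (r ^ ((m : ℝ) + ε) * r ^ ((-(2:ℝ)) * i'))) := by
      rw [hK1]; ring
    rw [expand1, expand2]
    exact mul_le_mul_of_nonneg_right hfacB (by positivity)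
  -- Step D : bounds on derivatives of G * G
  have hGGb : ∀ i' : ℕ, i' ≤ 2 → ‖iteratedFDerivWithin ℝ i' (fun y => G y * G y)
      {(0 : Euc m)}ᶜ x‖ ≤ K2 * r ^ (2 * (m : ℝ) + 2 * ε - 2 * i') := by
    intro i' hi'
    refine le_trans (norm_iteratedFDerivWithin_mul_le hGcd hGcd hUd hx'
      (by exact_mod_cast hi')) ?_
    have hterm : ∀ j ∈ Finset.range (i' + 1),
        (i'.choose j : ℝ) * ‖iteratedFDerivWithin ℝ j G {(0 : Euc m)}ᶜ x‖ *
          ‖iteratedFDerivWithin ℝ (i' - j) G {(0 : Euc m)}ᶜ x‖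
        ≤ (i'.choose j : ℝ) * (K1 ^ 2 * r ^ (2 * (m : ℝ) + 2 * ε - 2 * i')) := by
      intro j hj
      have hj' : j ≤ i' := Nat.lt_succ_iff.mp (Finset.mem_range.mp hj)
      have b1 := hGb j (hj'.trans hi')
      have b2 := hGb (i' - j) ((Nat.sub_le i' j).trans hi')
      have hcast : ((i' - j : ℕ) : ℝ) = (i' : ℝ) - j := Nat.cast_sub hj'
      have hprod : (K1 * r ^ ((m : ℝ) + ε - 2 * j)) * (K1 * r ^ ((m : ℝ) + ε - 2 * ((i' - j : ℕ) : ℝ)))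
          = K1 ^ 2 * r ^ (2 * (m : ℝ) + 2 * ε - 2 * i') := by
        rw [hcast]
        rw [show K1 * r ^ ((m : ℝ) + ε - 2 * j) * (K1 * r ^ ((m : ℝ) + ε - 2 * ((i':ℝ) - j)))
          = K1 ^ 2 * (r ^ ((m : ℝ) + ε - 2 * j) * r ^ ((m : ℝ) + ε - 2 * ((i':ℝ) - j))) from by ring]
        rw [← Real.rpow_add hrpos]
        ring_nf
      calc (i'.choose j : ℝ) * ‖iteratedFDerivWithin ℝ j G {(0 : Euc m)}ᶜ x‖ *
            ‖iteratedFDerivWithin ℝ (i' - j) G {(0 : Euc m)}ᶜ x‖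
          ≤ (i'.choose j : ℝ) * (K1 * r ^ ((m : ℝ) + ε - 2 * j)) *
            (K1 * r ^ ((m : ℝ) + ε - 2 * ((i' - j : ℕ) : ℝ))) := by
            apply mul_le_mul (mul_le_mul_of_nonneg_left b1 (by positivity)) b2
              (norm_nonneg _) (by positivity)
        _ = (i'.choose j : ℝ) * (K1 ^ 2 * r ^ (2 * (m : ℝ) + 2 * ε - 2 * i')) := by
            rw [mul_assoc, hprod]
    refine le_trans (Finset.sum_le_sum hterm) ?_
    rw [← Finset.sum_mul]
    have hcs : (∑ j ∈ Finset.range (i' + 1), (i'.choose j : ℝ)) = (2 : ℝ) ^ i' := by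
      rw [← Nat.cast_sum]
      rw [Nat.sum_range_choose]
      push_cast
      ring
    rw [hcs]
    have h4 : (2:ℝ) ^ i' ≤ 4 := by
      calc (2:ℝ) ^ i' ≤ 2 ^ 2 := pow_le_pow_right₀ one_le_two hi'
        _ = 4 := by norm_num
    calc (2:ℝ) ^ i' * (K1 ^ 2 * r ^ (2 * (m : ℝ) + 2 * ε - 2 * i'))
        ≤ 4 * (K1 ^ 2 * r ^ (2 * (m : ℝ) + 2 * ε - 2 * i')) :=
          mul_le_mul_of_nonneg_right h4 (by positivity)
      _ = K2 * r ^ (2 * (m : ℝ) + 2 * ε - 2 * i') := by rw [hK2]; ring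
  -- Step E : final bound
  have hfuneq : (fun ξ : Euc m => ‖ξ‖ ^ 2 * (η (kelvinInv' ξ)) ^ 2)
      = (fun ξ : Euc m => ‖ξ‖ ^ 2 * (G ξ * G ξ)) := by
    funext ξ
    simp only [hG, Function.comp_apply]
    ring
  rw [hfuneq, ← iteratedFDerivWithin_of_isOpen i hU hx']
  have hqcd : ContDiffOn ℝ 2 (fun y : Euc m => ‖y‖ ^ 2) {(0 : Euc m)}ᶜ :=
    (contDiff_norm_sq (𝕜 := ℝ)).contDiffOn
  refine le_trans (norm_iteratedFDerivWithin_mul_le hqcd hGGcd hUd hx'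
    (by exact_mod_cast hi)) ?_
  have hterm : ∀ j ∈ Finset.range (i + 1),
      (i.choose j : ℝ) * ‖iteratedFDerivWithin ℝ j (fun y : Euc m => ‖y‖ ^ 2) {(0 : Euc m)}ᶜ x‖ *
        ‖iteratedFDerivWithin ℝ (i - j) (fun y => G y * G y) {(0 : Euc m)}ᶜ x‖
      ≤ (i.choose j : ℝ) * (Qq * K2 * r ^ (2 * (m : ℝ) + 2 + 2 * ε - 2 * i)) := by
    intro j hj
    have hj' : j ≤ i := Nat.lt_succ_iff.mp (Finset.mem_range.mp hj)
    have b1 : ‖iteratedFDerivWithin ℝ j (fun y : Euc m => ‖y‖ ^ 2) {(0 : Euc m)}ᶜ x‖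
        ≤ Qq * r ^ (((2:ℤ) : ℝ) - j) := by
      rw [iteratedFDerivWithin_of_isOpen j hU hx']
      exact hQq j (hj'.trans hi) x hx
    have b2 := hGGb (i - j) ((Nat.sub_le i j).trans hi)
    have hcast : ((i - j : ℕ) : ℝ) = (i : ℝ) - j := Nat.cast_sub hj'
    calc (i.choose j : ℝ) * ‖iteratedFDerivWithin ℝ j (fun y : Euc m => ‖y‖ ^ 2) {(0 : Euc m)}ᶜ x‖ *
          ‖iteratedFDerivWithin ℝ (i - j) (fun y => G y * G y) {(0 : Euc m)}ᶜ x‖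
        ≤ (i.choose j : ℝ) * (Qq * r ^ (((2:ℤ) : ℝ) - j)) *
          (K2 * r ^ (2 * (m : ℝ) + 2 * ε - 2 * ((i - j : ℕ) : ℝ))) := by
          apply mul_le_mul (mul_le_mul_of_nonneg_left b1 (by positivity)) b2
            (norm_nonneg _) (by positivity)
      _ = (i.choose j : ℝ) * (Qq * K2 * (r ^ (((2:ℤ) : ℝ) - j) *
            r ^ (2 * (m : ℝ) + 2 * ε - 2 * ((i - j : ℕ) : ℝ)))) := by ring
      _ = (i.choose j : ℝ) * (Qq * K2 * r ^ ((((2:ℤ) : ℝ) - j) +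
            (2 * (m : ℝ) + 2 * ε - 2 * ((i - j : ℕ) : ℝ)))) := by
          rw [← Real.rpow_add hrpos]
      _ ≤ (i.choose j : ℝ) * (Qq * K2 * r ^ (2 * (m : ℝ) + 2 + 2 * ε - 2 * i)) := by
          apply mul_le_mul_of_nonneg_left _ (by positivity)
          apply mul_le_mul_of_nonneg_left _ (by positivity)
          apply Real.rpow_le_rpow_of_exponent_ge hrpos hr1
          rw [hcast]
          push_cast
          have : (0:ℝ) ≤ j := by positivity
          linarith
  refine le_trans (Finset.sum_le_sum hterm) ?_
  rw [← Finset.sum_mul]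
  have hcs : (∑ j ∈ Finset.range (i + 1), (i.choose j : ℝ)) = (2 : ℝ) ^ i := by
    rw [← Nat.cast_sum, Nat.sum_range_choose]
    push_cast
    ring
  rw [hcs]
  have h4 : (2:ℝ) ^ i ≤ 4 := by
    calc (2:ℝ) ^ i ≤ 2 ^ 2 := pow_le_pow_right₀ one_le_two hi
      _ = 4 := by norm_num
  calc (2:ℝ) ^ i * (Qq * K2 * r ^ (2 * (m : ℝ) + 2 + 2 * ε - 2 * i))
      ≤ 4 * (Qq * K2 * r ^ (2 * (m : ℝ) + 2 + 2 * ε - 2 * i)) :=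
        mul_le_mul_of_nonneg_right h4 (by positivity)
    _ = 4 * Qq * K2 * r ^ (2 * (m : ℝ) + 2 + 2 * ε - 2 * i) := by ring

open Topology in
lemma tendsto_pow_bound {mn : ℕ} (M a : ℝ) (ha : 0 < a)
    (hM : 0 ≤ M) : Filter.Tendsto (fun x : Euc mn => M * ‖x‖ ^ a) (𝓝 0) (𝓝 0) := by
  have h1 : Filter.Tendsto (fun x : Euc mn => ‖x‖) (𝓝 0) (𝓝 0) := by
    simpa using (continuous_norm (E := Euc mn)).tendsto 0
  have h2 : Filter.Tendsto (fun t : ℝ => t ^ a) (𝓝 0) (𝓝 0) := by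
    have := (Real.continuousAt_rpow_const 0 a (Or.inr ha.le)).tendsto
    rwa [Real.zero_rpow ha.ne'] at this
  have h3 := (h2.comp h1).const_mul M
  simpa using h3

open Topology in
lemma hasFDerivAt_zero_of_bound {mn : ℕ} {F : Type*} [NormedAddCommGroup F] [NormedSpace ℝ F]
    (f : Euc mn → F) (hf0 : f 0 = 0) (M a : ℝ) (ha : 0 < a) (hM : 0 ≤ M)
    (hb : ∀ x : Euc mn, x ≠ 0 → ‖x‖ < 1 → ‖f x‖ ≤ M * ‖x‖ ^ (1 + a)) :
    HasFDerivAt f (0 : Euc mn →L[ℝ] F) 0 := by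
  rw [hasFDerivAt_iff_isLittleO_nhds_zero]
  refine Asymptotics.isLittleO_iff.mpr ?_
  intro c hc
  have h1 := tendsto_pow_bound (mn := mn) M a ha hM
  filter_upwards [h1.eventually_lt_const hc, Metric.ball_mem_nhds (0 : Euc mn) one_pos]
    with x hx1 hx2
  simp only [zero_add, hf0, sub_zero, ContinuousLinearMap.zero_apply]
  by_cases hx0 : x = 0
  · simp [hx0, hf0]
  · have hxn : ‖x‖ < 1 := by simpa [mem_ball_zero_iff] using hx2
    have hnp : (0:ℝ) < ‖x‖ := norm_pos_iff.2 hx0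
    calc ‖f x‖ ≤ M * ‖x‖ ^ (1 + a) := hb x hx0 hxn
      _ = (M * ‖x‖ ^ a) * ‖x‖ := by
          rw [Real.rpow_add hnp, Real.rpow_one]; ring
      _ ≤ c * ‖x‖ := mul_le_mul_of_nonneg_right hx1.le (norm_nonneg _)

lemma norm_fderiv_eq_iter {mn : ℕ} {F : Type*} [NormedAddCommGroup F] [NormedSpace ℝ F]
    (f : Euc mn → F) (x : Euc mn) : ‖fderiv ℝ f x‖ = ‖iteratedFDeriv ℝ 1 f x‖ := by
  have h := norm_iteratedFDeriv_fderiv (𝕜 := ℝ) (f := f) (x := x) (n := 0)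
  rw [norm_iteratedFDeriv_zero] at h
  simpa using h

lemma norm_fderiv2_eq_iter {mn : ℕ} {F : Type*} [NormedAddCommGroup F] [NormedSpace ℝ F]
    (f : Euc mn → F) (x : Euc mn) :
    ‖fderiv ℝ (fderiv ℝ f) x‖ = ‖iteratedFDeriv ℝ 2 f x‖ := by
  have h1 := norm_iteratedFDeriv_fderiv (𝕜 := ℝ) (f := f) (x := x) (n := 1)
  rw [norm_fderiv_eq_iter (fderiv ℝ f) x]
  simpa using h1

def Hfun {mn : ℕ} (η : Euc mn → ℝ) (ξ : Euc mn) : ℝ := ‖ξ‖ ^ 2 * (η (kelvinInv' ξ)) ^ 2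

open Topology

/-- The function `|ξ|² η(ξ/|ξ|²)²` extends to a `C²` function near `ξ = 0` which vanishes
at `0` together with its first and second derivatives. -/
theorem inverted_eta_sq_extends {n : ℕ} (hn : n = 2 ∨ n = 3) (ε : ℝ)
    (hε : ε ∈ Set.Ioo (0 : ℝ) 1) (η : Euc (n - 1) → ℝ) (hη : ContDiff ℝ 2 η) (C : ℝ)
    (hdecay : ∀ x, 1 ≤ ‖x‖ →
      |η x| ≤ C * ‖x‖ ^ (-((n : ℝ) - 1 + ε)) ∧
      ‖fderiv ℝ η x‖ ≤ C * ‖x‖ ^ (-((n : ℝ) + ε)) ∧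
      ‖iteratedFDeriv ℝ 2 η x‖ ≤ C * ‖x‖ ^ (-((n : ℝ) + 1 + ε))) :
    ∃ δ > (0 : ℝ), ∃ h : Euc (n - 1) → ℝ,
      ContDiffOn ℝ 2 h (Metric.ball 0 δ) ∧
      (∀ ξ ∈ Metric.ball (0 : Euc (n - 1)) δ, ξ ≠ 0 →
        h ξ = ‖ξ‖ ^ 2 * (η ((‖ξ‖ ^ 2)⁻¹ • ξ)) ^ 2) ∧
      h 0 = 0 ∧ fderiv ℝ h 0 = 0 ∧ iteratedFDeriv ℝ 2 h 0 = 0 := by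
  obtain ⟨hε0, hε1⟩ := hε
  have hn1 : 1 ≤ n - 1 := by rcases hn with h | h <;> omega
  have hcast : ((n - 1 : ℕ) : ℝ) = (n : ℝ) - 1 := by
    rw [Nat.cast_sub (by omega : 1 ≤ n)]; norm_num
  have hexp : -(((n - 1 : ℕ) : ℝ) + ε) = -((n : ℝ) - 1 + ε) := by rw [hcast]
  set C' : ℝ := max C 0 with hC'
  have hC'0 : (0:ℝ) ≤ C' := le_max_right _ _
  have hCC' : C ≤ C' := le_max_left _ _
  have hd : ∀ i : ℕ, i ≤ 2 → ∀ y : Euc (n - 1), 1 ≤ ‖y‖ →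
      ‖iteratedFDeriv ℝ i η y‖ ≤ C' * ‖y‖ ^ (-(((n - 1 : ℕ) : ℝ) + ε)) := by
    intro i hi y hy
    obtain ⟨d0, d1, d2⟩ := hdecay y hy
    have hy0 : (0:ℝ) < ‖y‖ := lt_of_lt_of_le one_pos hy
    have hpos : ∀ e : ℝ, (0:ℝ) < ‖y‖ ^ e := fun e => Real.rpow_pos_of_pos hy0 e
    have hmono : ∀ e1 e2 : ℝ, e1 ≤ e2 → ‖y‖ ^ e1 ≤ ‖y‖ ^ e2 :=
      fun e1 e2 he => Real.rpow_le_rpow_of_exponent_le hy he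
    rw [hexp]
    interval_cases i
    · rw [norm_iteratedFDeriv_zero, Real.norm_eq_abs]
      exact le_trans d0 (mul_le_mul_of_nonneg_right hCC' (hpos _).le)
    · have hnorm1 : ‖iteratedFDeriv ℝ 1 η y‖ = ‖fderiv ℝ η y‖ := by
        rw [← norm_iteratedFDeriv_fderiv, norm_iteratedFDeriv_zero]
      rw [hnorm1]
      calc ‖fderiv ℝ η y‖ ≤ C * ‖y‖ ^ (-((n : ℝ) + ε)) := d1
        _ ≤ C' * ‖y‖ ^ (-((n : ℝ) + ε)) := mul_le_mul_of_nonneg_right hCC' (hpos _).le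
        _ ≤ C' * ‖y‖ ^ (-((n : ℝ) - 1 + ε)) :=
            mul_le_mul_of_nonneg_left (hmono _ _ (by linarith)) hC'0
    · calc ‖iteratedFDeriv ℝ 2 η y‖ ≤ C * ‖y‖ ^ (-((n : ℝ) + 1 + ε)) := d2
        _ ≤ C' * ‖y‖ ^ (-((n : ℝ) + 1 + ε)) := mul_le_mul_of_nonneg_right hCC' (hpos _).le
        _ ≤ C' * ‖y‖ ^ (-((n : ℝ) - 1 + ε)) :=
            mul_le_mul_of_nonneg_left (hmono _ _ (by linarith)) hC'0
  obtain ⟨M, hM0, hMb⟩ := main_bound (m := n - 1) ε C' hε0 hC'0 η hη hd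
  set mr : ℝ := ((n - 1 : ℕ) : ℝ) with hmr
  have hmr1 : (1:ℝ) ≤ mr := by rw [hmr]; exact_mod_cast hn1
  have hh0 : Hfun η 0 = 0 := by simp [Hfun]
  -- specialized bounds
  have hMb' : ∀ i : ℕ, i ≤ 2 → ∀ x : Euc (n - 1), x ≠ 0 → ‖x‖ < 1 →
      ‖iteratedFDeriv ℝ i (Hfun η) x‖ ≤ M * ‖x‖ ^ (2 * mr + 2 + 2 * ε - 2 * i) :=
    fun i hi x hx hx1 => hMb i hi x hx hx1
  have hb0 : ∀ x : Euc (n - 1), x ≠ 0 → ‖x‖ < 1 →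
      ‖Hfun η x‖ ≤ M * ‖x‖ ^ (1 + (2 * mr + 1 + 2 * ε)) := by
    intro x hx hx1
    have := hMb' 0 (by norm_num) x hx hx1
    rw [norm_iteratedFDeriv_zero] at this
    rw [show (1 + (2 * mr + 1 + 2 * ε)) = 2 * mr + 2 + 2 * ε - 2 * ((0:ℕ):ℝ) from by
      push_cast; ring]
    exact this
  have hb1 : ∀ x : Euc (n - 1), x ≠ 0 → ‖x‖ < 1 →
      ‖fderiv ℝ (Hfun η) x‖ ≤ M * ‖x‖ ^ (1 + (2 * mr - 1 + 2 * ε)) := by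
    intro x hx hx1
    have := hMb' 1 (by norm_num) x hx hx1
    rw [norm_fderiv_eq_iter]
    rw [show (1 + (2 * mr - 1 + 2 * ε)) = 2 * mr + 2 + 2 * ε - 2 * ((1:ℕ):ℝ) from by
      push_cast; ring]
    exact this
  have hb2 : ∀ x : Euc (n - 1), x ≠ 0 → ‖x‖ < 1 →
      ‖fderiv ℝ (fderiv ℝ (Hfun η)) x‖ ≤ M * ‖x‖ ^ (2 * mr - 2 + 2 * ε) := by
    intro x hx hx1
    have := hMb' 2 (by norm_num) x hx hx1
    rw [norm_fderiv2_eq_iter]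
    rw [show (2 * mr - 2 + 2 * ε) = 2 * mr + 2 + 2 * ε - 2 * ((2:ℕ):ℝ) from by
      push_cast; ring]
    exact this
  -- derivatives vanish at 0
  have hF0 : HasFDerivAt (Hfun η) (0 : Euc (n-1) →L[ℝ] ℝ) 0 :=
    hasFDerivAt_zero_of_bound _ hh0 M _ (by linarith) hM0 hb0
  have hfder0 : fderiv ℝ (Hfun η) 0 = 0 := hF0.fderiv
  have hF1 : HasFDerivAt (fderiv ℝ (Hfun η)) (0 : Euc (n-1) →L[ℝ] (Euc (n-1) →L[ℝ] ℝ)) 0 :=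
    hasFDerivAt_zero_of_bound _ (by rw [hfder0]) M _ (by linarith) hM0 hb1
  have hfder20 : fderiv ℝ (fderiv ℝ (Hfun η)) 0 = 0 := hF1.fderiv
  have hit2 : iteratedFDeriv ℝ 2 (Hfun η) 0 = 0 := by
    ext v
    rw [iteratedFDeriv_two_apply, hfder20]
    simp
  -- continuity of the second derivative at 0
  have hcont0 : Filter.Tendsto (fderiv ℝ (fderiv ℝ (Hfun η))) (𝓝 0)
      (𝓝 (0 : Euc (n-1) →L[ℝ] (Euc (n-1) →L[ℝ] ℝ))) := by
    refine squeeze_zero_norm' (f := fderiv ℝ (fderiv ℝ (Hfun η))) ?_ (tendsto_pow_bound M (2 * mr - 2 + 2 * ε) (by linarith) hM0)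
    filter_upwards [Metric.ball_mem_nhds (0 : Euc (n - 1)) one_pos] with x hx
    by_cases hx0 : x = 0
    · rw [hx0, hfder20, norm_zero]
      have : ‖(0 : Euc (n-1))‖ ^ (2 * mr - 2 + 2 * ε) = 0 := by
        rw [norm_zero, Real.zero_rpow (by linarith : (0:ℝ) < 2 * mr - 2 + 2 * ε).ne']
      rw [Real.zero_rpow (by linarith : (0:ℝ) < 2 * mr - 2 + 2 * ε).ne', mul_zero]
      exact (norm_zero (E := Euc (n-1) →L[ℝ] Euc (n-1) →L[ℝ] ℝ)).le
    · exact hb2 x hx0 (mem_ball_zero_iff.mp hx)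
  -- smoothness away from the origin
  have hU : IsOpen ({(0 : Euc (n - 1))}ᶜ) := isOpen_compl_singleton
  have hC2U : ContDiffOn ℝ 2 (Hfun η) ({(0 : Euc (n - 1))}ᶜ) :=
    ((contDiff_norm_sq (𝕜 := ℝ)).contDiffOn).mul ((hη.comp_contDiffOn kelvin_contDiffOn).pow 2)
  have hfd1 : ContDiffOn ℝ 1 (fderiv ℝ (Hfun η)) ({(0 : Euc (n - 1))}ᶜ) :=
    hC2U.fderiv_of_isOpen hU (by norm_num)
  have hcont2 : ContinuousOn (fderiv ℝ (fderiv ℝ (Hfun η))) ({(0 : Euc (n - 1))}ᶜ) :=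
    hfd1.continuousOn_fderiv_of_isOpen hU le_rfl
  refine ⟨1, one_pos, Hfun η, ?_, fun ξ _ _ => rfl, hh0, hfder0, hit2⟩
  have hdiff : DifferentiableOn ℝ (Hfun η) (Metric.ball 0 1) := by
    intro x hx
    by_cases hx0 : x = 0
    · rw [hx0]; exact hF0.differentiableAt.differentiableWithinAt
    · exact ((hC2U.differentiableOn (by norm_num)).differentiableAt
        (hU.mem_nhds (by simpa using hx0))).differentiableWithinAt
  have hdiff1 : DifferentiableOn ℝ (fderiv ℝ (Hfun η)) (Metric.ball 0 1) := by
    intro x hx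
    by_cases hx0 : x = 0
    · rw [hx0]; exact hF1.differentiableAt.differentiableWithinAt
    · exact ((hfd1.differentiableOn (by norm_num)).differentiableAt
        (hU.mem_nhds (by simpa using hx0))).differentiableWithinAt
  have hcontball : ContinuousOn (fderiv ℝ (fderiv ℝ (Hfun η))) (Metric.ball 0 1) := by
    intro x hx
    by_cases hx0 : x = 0
    · rw [hx0]
      have : ContinuousAt (fderiv ℝ (fderiv ℝ (Hfun η))) 0 := by
        unfold ContinuousAt
        rw [hfder20]
        exact hcont0
      exact this.continuousWithinAt
    · exact (hcont2.continuousAt (hU.mem_nhds (by simpa using hx0))).continuousWithinAt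
  rw [show (2 : WithTop ℕ∞) = 1 + 1 from rfl,
    contDiffOn_succ_iff_fderiv_of_isOpen Metric.isOpen_ball]
  refine ⟨hdiff, by intro hω; exact absurd hω (by simp), ?_⟩
  rw [show (1 : WithTop ℕ∞) = 0 + 1 from rfl,
    contDiffOn_succ_iff_fderiv_of_isOpen Metric.isOpen_ball]
  refine ⟨hdiff1, by intro hω; exact absurd hω (by simp), ?_⟩
  rw [contDiffOn_zero]
  exact hcontball
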